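/- Let P > 0 be a capacity and D : Fin m → ℝ nonnegative demands, and let y : Fin R → Fin m → ℝ be a feasible spray matrix. Then there exists a feasible spray matrix ȳ : Fin R → Fin m → ℝ such that ȳ r j > 0 implies y r j > 0 for all r and j (so the support of ȳ is contained in the support of y), and the number of multi-supported rows of ȳ is at most m − 1, i.e. strictly fewer than m rows have support of size at least two. (This is the matrix core of the paper's Theorem 1: since the support only shrinks, any routing compatible with y is compatible with ȳ at the same cost, so an optimal solution exists in which fewer than m robots spray multiple edges.) -/

import Mathlib

open Finset

/-- Linear algebra bound: if the only matrix supported in `S` with all row sums and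
column sums zero is `0`, then `S.card ≤ A.card + (m-1)` where `A` contains all row
indices of `S`. -/
lemma spray_aux_la (R m : ℕ) (S : Finset (Fin R × Fin m)) (A : Finset (Fin R)) (j₀ : Fin m)
    (hSA : ∀ p ∈ S, p.1 ∈ A)
    (hker : ∀ δ : Fin R → Fin m → ℝ, (∀ r j, δ r j ≠ 0 → (r, j) ∈ S) →
      (∀ r, ∑ j, δ r j = 0) → (∀ j, ∑ r, δ r j = 0) → δ = 0) :
    S.card ≤ A.card + (m - 1) := by
  classical
  set C : Finset (Fin m) := Finset.univ.erase j₀ with hC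
  let M : (↥S → ℝ) → Fin R → Fin m → ℝ := fun g r j =>
    if h : (r, j) ∈ S then g ⟨(r, j), h⟩ else 0
  have hMadd : ∀ g g' : ↥S → ℝ, ∀ r j, M (g + g') r j = M g r j + M g' r j := by
    intro g g' r j
    by_cases h : (r, j) ∈ S <;> simp [M, h]
  have hMsmul : ∀ (c : ℝ) (g : ↥S → ℝ), ∀ r j, M (c • g) r j = c * M g r j := by
    intro c g r j
    by_cases h : (r, j) ∈ S <;> simp [M, h]
  let Φ : (↥S → ℝ) →ₗ[ℝ] ((↥A → ℝ) × (↥C → ℝ)) :=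
    { toFun := fun g => (fun r => ∑ j, M g r.1 j, fun j => ∑ r, M g r j.1)
      map_add' := by
        intro g g'
        refine Prod.ext ?_ ?_ <;> funext x <;>
          simp [hMadd, Finset.sum_add_distrib]
      map_smul' := by
        intro c g
        refine Prod.ext ?_ ?_ <;> funext x <;>
          simp [hMsmul, Finset.mul_sum] }
  have hinj : Function.Injective Φ := by
    intro g g' h
    set δ : Fin R → Fin m → ℝ := fun r j => M g r j - M g' r j with hδdef
    have hsupp : ∀ r j, δ r j ≠ 0 → (r, j) ∈ S := by
      intro r j hne
      by_contra hmem
      simp [hδdef, M, hmem] at hne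
    have hrow : ∀ r, ∑ j, δ r j = 0 := by
      intro r
      by_cases hr : r ∈ A
      · have h1 := congrArg (fun q => q.1 ⟨r, hr⟩) h
        simp only [Φ, LinearMap.coe_mk, AddHom.coe_mk] at h1
        simp [hδdef, Finset.sum_sub_distrib, h1]
      · have hz : ∀ j, δ r j = 0 := by
          intro j
          by_contra hne
          exact hr (hSA _ (hsupp r j hne))
        simp [hz]
    have htot : ∑ j, ∑ r, δ r j = 0 := by
      rw [Finset.sum_comm]
      simp [hrow]
    have hcol : ∀ j, ∑ r, δ r j = 0 := by
      have hC' : ∀ j ∈ C, ∑ r, δ r j = 0 := by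
        intro j hj
        have h1 := congrArg (fun q => q.2 ⟨j, hj⟩) h
        simp only [Φ, LinearMap.coe_mk, AddHom.coe_mk] at h1
        simp [hδdef, Finset.sum_sub_distrib, h1]
      intro j
      by_cases hj : j = j₀
      · have h1 : ∑ jj ∈ Finset.univ.erase j₀, (∑ r, δ r jj) + ∑ r, δ r j₀ = 0 := by
          rw [Finset.sum_erase_add _ _ (Finset.mem_univ j₀)]
          exact htot
        rw [Finset.sum_eq_zero hC', zero_add] at h1
        rw [hj]
        exact h1
      · exact hC' j (Finset.mem_erase.mpr ⟨hj, Finset.mem_univ j⟩)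
    have hδ0 := hker δ hsupp hrow hcol
    funext p
    obtain ⟨⟨r, j⟩, hp⟩ := p
    have h2 : δ r j = 0 := by rw [hδ0]; rfl
    have h3 : M g r j - M g' r j = 0 := h2
    simpa [M, hp, sub_eq_zero] using h3
  have hle := LinearMap.finrank_le_finrank_of_injective hinj
  have h1 : Module.finrank ℝ (↥S → ℝ) = S.card := by
    rw [Module.finrank_fintype_fun_eq_card, Fintype.card_coe]
  have h2 : Module.finrank ℝ ((↥A → ℝ) × (↥C → ℝ)) = A.card + (m - 1) := by
    rw [Module.finrank_prod, Module.finrank_fintype_fun_eq_card,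
      Module.finrank_fintype_fun_eq_card, Fintype.card_coe, Fintype.card_coe, hC,
      Finset.card_erase_of_mem (Finset.mem_univ j₀), Finset.card_univ, Fintype.card_fin]
  rw [h1, h2] at hle
  exact hle

theorem spray_matrix_few_multi_supported_rows
    (R m : ℕ) (hm : 1 ≤ m) (P : ℝ) (hP : 0 < P)
    (D : Fin m → ℝ) (hD : ∀ j, 0 ≤ D j)
    (y : Fin R → Fin m → ℝ)
    (hy_nonneg : ∀ r j, 0 ≤ y r j)
    (hy_cap : ∀ r, ∑ j, y r j ≤ P)
    (hy_dem : ∀ j, ∑ r, y r j = D j) :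
    ∃ ybar : Fin R → Fin m → ℝ,
      (∀ r j, 0 ≤ ybar r j) ∧
      (∀ r, ∑ j, ybar r j ≤ P) ∧
      (∀ j, ∑ r, ybar r j = D j) ∧
      (∀ r j, 0 < ybar r j → 0 < y r j) ∧
      {r : Fin R | 2 ≤ {j : Fin m | 0 < ybar r j}.ncard}.ncard < m := by
  classical
  set Feas : (Fin R → Fin m → ℝ) → Prop := fun z =>
    (∀ r j, 0 ≤ z r j) ∧ (∀ r, ∑ j, z r j ≤ P) ∧ (∀ j, ∑ r, z r j = D j) ∧
      (∀ r j, 0 < z r j → 0 < y r j) with hFeas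
  set scard : (Fin R → Fin m → ℝ) → ℕ := fun z =>
    (Finset.univ.filter (fun p : Fin R × Fin m => 0 < z p.1 p.2)).card with hscard
  set Cards : Set ℕ := {n | ∃ z, Feas z ∧ scard z = n} with hCards
  have hyF : Feas y := ⟨hy_nonneg, hy_cap, hy_dem, fun r j h => h⟩
  have hne : Cards.Nonempty := ⟨scard y, y, hyF, rfl⟩
  obtain ⟨z, hzF, hzc⟩ : ∃ z, Feas z ∧ scard z = sInf Cards := Nat.sInf_mem hne
  obtain ⟨hz0, hzP, hzD, hzy⟩ := hzF
  -- kernel triviality at the minimizer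
  have hker : ∀ δ : Fin R → Fin m → ℝ,
      (∀ r j, δ r j ≠ 0 → 0 < z r j) →
      (∀ r, ∑ j, δ r j = 0) → (∀ j, ∑ r, δ r j = 0) → δ = 0 := by
    intro δ hsupp hrow hcol
    by_contra hδne
    have hneg : ∃ p : Fin R × Fin m, δ p.1 p.2 < 0 := by
      by_contra hno
      push_neg at hno
      apply hδne
      funext r j
      have h1 : ∀ j' ∈ (Finset.univ : Finset (Fin m)), (0:ℝ) ≤ δ r j' :=
        fun j' _ => hno (r, j')
      exact (Finset.sum_eq_zero_iff_of_nonneg h1).mp (hrow r) j (Finset.mem_univ j)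
    obtain ⟨p₀, hp₀⟩ := hneg
    set T : Finset (Fin R × Fin m) :=
      Finset.univ.filter (fun p => δ p.1 p.2 < 0) with hT
    have hTne : T.Nonempty := ⟨p₀, by simp [hT, hp₀]⟩
    set f : Fin R × Fin m → ℝ := fun p => z p.1 p.2 / (-δ p.1 p.2) with hf
    set ε : ℝ := T.inf' hTne f with hε
    have hzpos : ∀ p ∈ T, 0 < z p.1 p.2 := by
      intro p hp
      have hδp : δ p.1 p.2 < 0 := by simpa [hT] using hp
      exact hsupp p.1 p.2 (ne_of_lt hδp)
    have hεpos : 0 < ε := by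
      rw [hε, Finset.lt_inf'_iff]
      intro p hp
      have hδp : δ p.1 p.2 < 0 := by simpa [hT] using hp
      exact div_pos (hzpos p hp) (by linarith)
    have hεle : ∀ p ∈ T, ε ≤ f p := fun p hp => Finset.inf'_le _ hp
    set w : Fin R → Fin m → ℝ := fun r j => z r j + ε * δ r j with hw
    have hw0 : ∀ r j, 0 ≤ w r j := by
      intro r j
      rcases lt_or_ge (δ r j) 0 with h | h
      · have hpT : (r, j) ∈ T := by simp [hT, h]
        have h1 : ε ≤ z r j / (-δ r j) := hεle _ hpT
        have h2 : (0:ℝ) < -δ r j := by linarith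
        have h3 : ε * (-δ r j) ≤ z r j := (le_div_iff₀ h2).mp h1
        simp only [hw]
        nlinarith
      · have : 0 ≤ ε * δ r j := mul_nonneg hεpos.le h
        exact add_nonneg (hz0 r j) this
    have hwsupp : ∀ r j, 0 < w r j → 0 < z r j := by
      intro r j h
      by_cases hδ : δ r j = 0
      · simpa [hw, hδ] using h
      · exact hsupp r j hδ
    have hwF : Feas w := by
      refine ⟨hw0, ?_, ?_, fun r j h => hzy r j (hwsupp r j h)⟩
      · intro r
        have : ∑ j, w r j = ∑ j, z r j + ε * ∑ j, δ r j := by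
          simp [hw, Finset.sum_add_distrib, Finset.mul_sum]
        rw [this, hrow r]
        simpa using hzP r
      · intro j
        have : ∑ r, w r j = ∑ r, z r j + ε * ∑ r, δ r j := by
          simp [hw, Finset.sum_add_distrib, Finset.mul_sum]
        rw [this, hcol j]
        simpa using hzD j
    obtain ⟨pq, hpqT, hpq⟩ := Finset.exists_mem_eq_inf' hTne f
    have hδpq : δ pq.1 pq.2 < 0 := by simpa [hT] using hpqT
    have hwp : w pq.1 pq.2 = 0 := by
      have hne0 : -δ pq.1 pq.2 ≠ 0 := by linarith
      simp only [hw]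
      rw [← hε] at hpq
      rw [hpq]
      field_simp [hf]
      simp only [hf]
      rw [div_mul_eq_mul_div, div_neg, mul_div_assoc, div_self (neg_ne_zero.mp hne0)]
      ring
    have hsubset : Finset.univ.filter (fun p : Fin R × Fin m => 0 < w p.1 p.2) ⊆
        Finset.univ.filter (fun p : Fin R × Fin m => 0 < z p.1 p.2) := by
      intro p hp
      simp only [Finset.mem_filter, Finset.mem_univ, true_and] at hp ⊢
      exact hwsupp p.1 p.2 hp
    have hsub : Finset.univ.filter (fun p : Fin R × Fin m => 0 < w p.1 p.2) ⊂
        Finset.univ.filter (fun p : Fin R × Fin m => 0 < z p.1 p.2) := by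
      refine (Finset.ssubset_iff_of_subset hsubset).mpr ⟨pq, ?_, ?_⟩
      · simp only [Finset.mem_filter, Finset.mem_univ, true_and]
        exact hzpos pq hpqT
      · simp [hwp]
    have hlt : scard w < sInf Cards := by
      rw [← hzc]
      exact Finset.card_lt_card hsub
    have hmem : scard w ∈ Cards := by
      rw [hCards]
      exact ⟨w, hwF, rfl⟩
    exact absurd (Nat.sInf_le hmem) (not_le.mpr hlt)
  -- counting part
  set d : Fin R → ℕ := fun r => (Finset.univ.filter (fun j => 0 < z r j)).card with hd
  set S : Finset (Fin R × Fin m) :=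
    Finset.univ.filter (fun p : Fin R × Fin m => 0 < z p.1 p.2) with hS
  set A : Finset (Fin R) := Finset.univ.filter (fun r => 0 < d r) with hA
  have hSA : ∀ p ∈ S, p.1 ∈ A := by
    intro p hp
    simp only [hS, Finset.mem_filter, Finset.mem_univ, true_and] at hp
    simp only [hA, Finset.mem_filter, Finset.mem_univ, true_and, hd]
    exact Finset.card_pos.mpr ⟨p.2, by simp [hp]⟩
  have hla : S.card ≤ A.card + (m - 1) := by
    refine spray_aux_la R m S A ⟨0, hm⟩ hSA ?_
    intro δ hsupp hrow hcol
    refine hker δ ?_ hrow hcol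
    intro r j hne
    have := hsupp r j hne
    simpa [hS] using this
  have hcard : S.card = ∑ r : Fin R, d r := by
    rw [hS, Finset.card_eq_sum_card_fiberwise
      (f := Prod.fst) (t := Finset.univ) (fun x _ => Finset.mem_univ _)]
    refine Finset.sum_congr rfl ?_
    intro r _
    rw [hd]
    refine Finset.card_bij (fun p _ => p.2) ?_ ?_ ?_
    · intro p hp
      simp only [Finset.mem_filter, Finset.mem_univ, true_and] at hp ⊢
      rw [← hp.2]
      exact hp.1
    · intro p hp p' hp' hpp
      simp only [Finset.mem_filter, Finset.mem_univ, true_and] at hp hp'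
      exact Prod.ext (hp.2.trans hp'.2.symm) hpp
    · intro j hj
      simp only [Finset.mem_filter, Finset.mem_univ, true_and] at hj
      exact ⟨(r, j), by simp [hj], rfl⟩
  set K : Finset (Fin R) := Finset.univ.filter (fun r => 2 ≤ d r) with hK
  have hAK : A.card + K.card ≤ ∑ r : Fin R, d r := by
    have h1 : ∑ r ∈ A, d r ≤ ∑ r : Fin R, d r :=
      Finset.sum_le_sum_of_subset (Finset.subset_univ A)
    have h2 : ∀ r ∈ A, 1 + (if 2 ≤ d r then 1 else 0) ≤ d r := by
      intro r hr
      have hr1 : 0 < d r := by simpa [hA] using hr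
      by_cases h : 2 ≤ d r <;> simp [h] <;> omega
    have h3 : A.card + K.card ≤ ∑ r ∈ A, d r := by
      have h4 : ∑ r ∈ A, (1 + (if 2 ≤ d r then 1 else 0)) ≤ ∑ r ∈ A, d r :=
        Finset.sum_le_sum h2
      have h5 : ∑ r ∈ A, (1 + (if 2 ≤ d r then 1 else 0)) =
          A.card + (A.filter (fun r => 2 ≤ d r)).card := by
        rw [Finset.sum_add_distrib, Finset.sum_ite, Finset.sum_const, Finset.sum_const]
        simp
      have h6 : A.filter (fun r => 2 ≤ d r) = K := by
        rw [hK, hA]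
        rw [Finset.filter_filter]
        refine Finset.filter_congr ?_
        intro r _
        constructor
        · intro h; exact h.2
        · intro h; exact ⟨by omega, h⟩
      rw [h5, h6] at h4
      exact h4
    exact h3.trans h1
  have hKm : K.card ≤ m - 1 := by omega
  refine ⟨z, hz0, hzP, hzD, hzy, ?_⟩
  have hsetr : ∀ r : Fin R, {j : Fin m | 0 < z r j}.ncard = d r := by
    intro r
    rw [Set.ncard_eq_toFinset_card']
    rw [hd]
    congr 1
    ext j
    simp
  have hfinal : {r : Fin R | 2 ≤ {j : Fin m | 0 < z r j}.ncard}.ncard = K.card := by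
    have hseq : {r : Fin R | 2 ≤ {j : Fin m | 0 < z r j}.ncard} = {r : Fin R | 2 ≤ d r} := by
      ext r
      simp [hsetr r]
    rw [hseq, Set.ncard_eq_toFinset_card']
    rw [hK]
    congr 1
    ext r
    simp
  rw [hfinal]
  omega
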